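/- Let F ∈ Mₙ(ℂ) be skew-symmetric, let Φ = −(1/2) Σ_{i,j=1}^n F_{ij} e_i ∧ e_j ∈ Λ²(ℂⁿ), and let W = Σ_{k=0}^{n} Φ^k / k! ∈ Λ(ℂⁿ) (a finite sum, since Φ is nilpotent; W is the Grassmann–Gaussian exponent exp Φ). Then W ≠ 0 and, for every i = 1,…,n, ∂_i W + Σ_{j=1}^n F_{ij} (e_j ∧ W) = 0; that is, W is annihilated by each operator ∂_i + Σ_j F_{ij} x_j. -/

import Mathlib

open Matrix

noncomputable section

/-- The symmetric bilinear form `B((β,γ),(β',γ')) = Σ_t (β_t γ'_t + β'_t γ_t)` on `ℂⁿ ⊕ ℂⁿ`. -/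
def Bform (n : ℕ) (p q : (Fin n → ℂ) × (Fin n → ℂ)) : ℂ :=
  ∑ t, (p.1 t * q.2 t + q.1 t * p.2 t)

/-- The Grassmann (exterior) algebra `Λ(ℂⁿ)` on `n` generators. -/
abbrev GA (n : ℕ) := ExteriorAlgebra ℂ (Fin n → ℂ)

/-- `x_t` : left exterior multiplication by the `t`-th standard basis vector `e_t`. -/
noncomputable def Xop (n : ℕ) (t : Fin n) : GA n →ₗ[ℂ] GA n :=
  LinearMap.mulLeft ℂ (ExteriorAlgebra.ι ℂ (Pi.single t 1))

/-- `∂_t` : left interior multiplication (contraction) with the `t`-th dual basis vector. -/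
noncomputable def Dop (n : ℕ) (t : Fin n) : GA n →ₗ[ℂ] GA n :=
  CliffordAlgebra.contractLeft (LinearMap.proj t)

/-- The operator `d_{(β,γ)} = Σ_t (β_t ∂_t + γ_t x_t)` on `Λ(ℂⁿ)`. -/
noncomputable def dOp (n : ℕ) (p : (Fin n → ℂ) × (Fin n → ℂ)) : GA n →ₗ[ℂ] GA n :=
  ∑ t, (p.1 t • Dop n t + p.2 t • Xop n t)

/-! ### Auxiliary definitions and lemmas -/

/-- The `i`-th Grassmann generator `e_i`. -/
noncomputable def ee (n : ℕ) (i : Fin n) : GA n := ExteriorAlgebra.ι ℂ (Pi.single i 1)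

lemma Dop_ι_mul (n : ℕ) (t : Fin n) (w : Fin n → ℂ) (a : GA n) :
    Dop n t (ExteriorAlgebra.ι ℂ w * a) = w t • a - ExteriorAlgebra.ι ℂ w * Dop n t a := by
  exact CliffordAlgebra.contractLeft_ι_mul (Q := (0 : QuadraticForm ℂ (Fin n → ℂ)))
    (d := LinearMap.proj t) w a

lemma Dop_ee_mul (n : ℕ) (t i : Fin n) (a : GA n) :
    Dop n t (ee n i * a) = (if t = i then (1:ℂ) else 0) • a - ee n i * Dop n t a := by
  rw [ee, Dop_ι_mul, Pi.single_apply]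

lemma Dop_one (n : ℕ) (t : Fin n) : Dop n t (1 : GA n) = 0 := by
  exact CliffordAlgebra.contractLeft_one (Q := (0 : QuadraticForm ℂ (Fin n → ℂ)))
    (d := LinearMap.proj t)

/-- Any product of more than `n` generators vanishes in `Λ(ℂⁿ)`. -/
lemma long_prod_zero (n m : ℕ) (hm : n < m) (f : Fin m → (Fin n → ℂ)) :
    (List.ofFn fun i => ExteriorAlgebra.ι ℂ (f i)).prod = 0 := by
  rw [← ExteriorAlgebra.ιMulti_apply]
  refine AlternatingMap.map_linearDependent _ _ fun h => ?_
  have := h.fintype_card_le_finrank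
  simp [Module.finrank_fin_fun] at this
  omega

/-- Elements of the `m`-th power of the range of `ι` vanish when `m > n`. -/
lemma mem_pow_range_eq_zero (n m : ℕ) (hm : n < m) (x : GA n)
    (hx : x ∈ (LinearMap.range (ExteriorAlgebra.ι ℂ (M := Fin n → ℂ)) : Submodule ℂ (GA n)) ^ m) :
    x = 0 := by
  rw [Submodule.pow_eq_span_pow_set] at hx
  induction hx using Submodule.span_induction with
  | mem a ha =>
    obtain ⟨f, rfl⟩ := Set.mem_pow.mp ha
    choose g hg using fun i => (f i).2
    have hlist : (List.ofFn fun i => ((f i : GA n))).prod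
        = (List.ofFn fun i => ExteriorAlgebra.ι ℂ (g i)).prod := by
      congr 1; ext i; simp [hg]
    rw [hlist]
    exact long_prod_zero n m hm g
  | zero => rfl
  | add x y _ _ hx hy => rw [hx, hy, add_zero]
  | smul c x _ hx => rw [hx, smul_zero]

section Main

variable (n : ℕ) (F : Matrix (Fin n) (Fin n) ℂ)

/-- The quadratic element, written with `ee`. -/
noncomputable def Phi : GA n :=
  -(1/2 : ℂ) • ∑ i, ∑ j, F i j • (ee n i * ee n j)

/-- `G_t = Σ_j F_{tj} e_j`. -/
noncomputable def Gt (t : Fin n) : GA n := ∑ j, F t j • ee n j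

lemma Dop_Phi_mul (hF : Fᵀ = -F) (t : Fin n) (a : GA n) :
    Dop n t (Phi n F * a) = -(Gt n F t * a) + Phi n F * Dop n t a := by
  have hFe : ∀ i j, F j i = -F i j := fun i j => by
    have := congrFun (congrFun hF i) j; simpa [Matrix.transpose_apply] using this
  have hGa : Gt n F t * a = ∑ j, F t j • (ee n j * a) := by
    rw [Gt, Finset.sum_mul]; simp [smul_mul_assoc]
  rw [Phi, hGa]
  simp only [smul_mul_assoc, Finset.sum_mul, _root_.map_smul, _root_.map_sum, mul_assoc,
    Dop_ee_mul]
  simp only [mul_sub, mul_smul_comm, smul_sub, smul_smul, ite_smul, one_smul, zero_smul,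
    smul_ite, smul_zero, Finset.sum_sub_distrib, Finset.sum_ite_eq, Finset.mem_univ, if_true]
  simp only [mul_ite, mul_zero, smul_ite, smul_zero, Finset.sum_ite_irrel, Finset.sum_const_zero,
    Finset.sum_ite_eq, Finset.mem_univ, if_true]
  have hswap : ∑ x, F x t • (ee n x * a) = -∑ x, F t x • (ee n x * a) := by
    rw [← Finset.sum_neg_distrib]
    exact Finset.sum_congr rfl fun x _ => by rw [hFe t x, neg_smul]
  rw [hswap]
  module

lemma ι_mul_Phi (w : Fin n → ℂ) :
    ExteriorAlgebra.ι ℂ w * Phi n F = Phi n F * ExteriorAlgebra.ι ℂ w := by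
  have hcomm : ∀ b c : Fin n → ℂ,
      ExteriorAlgebra.ι ℂ w * (ExteriorAlgebra.ι ℂ b * ExteriorAlgebra.ι ℂ c)
        = (ExteriorAlgebra.ι ℂ b * ExteriorAlgebra.ι ℂ c) * ExteriorAlgebra.ι ℂ w := by
    intro b c
    have hab : ExteriorAlgebra.ι ℂ w * ExteriorAlgebra.ι ℂ b
        = -(ExteriorAlgebra.ι ℂ b * ExteriorAlgebra.ι ℂ w) :=
      eq_neg_of_add_eq_zero_left (ExteriorAlgebra.ι_add_mul_swap w b)
    have hac : ExteriorAlgebra.ι ℂ w * ExteriorAlgebra.ι ℂ c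
        = -(ExteriorAlgebra.ι ℂ c * ExteriorAlgebra.ι ℂ w) :=
      eq_neg_of_add_eq_zero_left (ExteriorAlgebra.ι_add_mul_swap w c)
    calc ExteriorAlgebra.ι ℂ w * (ExteriorAlgebra.ι ℂ b * ExteriorAlgebra.ι ℂ c)
        = (ExteriorAlgebra.ι ℂ w * ExteriorAlgebra.ι ℂ b) * ExteriorAlgebra.ι ℂ c := by
          rw [mul_assoc]
      _ = -(ExteriorAlgebra.ι ℂ b * (ExteriorAlgebra.ι ℂ w * ExteriorAlgebra.ι ℂ c)) := by
          rw [hab]; noncomm_ring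
      _ = ExteriorAlgebra.ι ℂ b * (ExteriorAlgebra.ι ℂ c * ExteriorAlgebra.ι ℂ w) := by
          rw [hac]; noncomm_ring
      _ = _ := by rw [mul_assoc]
  rw [Phi]
  simp only [mul_smul_comm, smul_mul_assoc, Finset.mul_sum, Finset.sum_mul]
  congr 1
  refine Finset.sum_congr rfl fun i _ => Finset.sum_congr rfl fun j _ => ?_
  simp only [ee]
  rw [hcomm]

lemma Gt_mul_Phi (t : Fin n) : Gt n F t * Phi n F = Phi n F * Gt n F t := by
  rw [Gt, Finset.sum_mul, Finset.mul_sum]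
  refine Finset.sum_congr rfl fun j _ => ?_
  rw [smul_mul_assoc, mul_smul_comm, ee, ι_mul_Phi]

lemma Dop_Phi_pow (hF : Fᵀ = -F) (t : Fin n) (k : ℕ) :
    Dop n t (Phi n F ^ (k + 1)) = -((k + 1 : ℕ) : ℂ) • (Gt n F t * Phi n F ^ k) := by
  induction k with
  | zero =>
    rw [pow_one, show Phi n F = Phi n F * 1 from (mul_one _).symm, Dop_Phi_mul n F hF,
      Dop_one, mul_zero, add_zero, mul_one, pow_zero, mul_one]
    simp
  | succ k ih =>
    rw [pow_succ' (Phi n F) (k + 1), Dop_Phi_mul n F hF, ih]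
    rw [mul_smul_comm, ← mul_assoc, ← Gt_mul_Phi, mul_assoc, ← pow_succ' (Phi n F) k]
    push_cast
    module

lemma Phi_pow_n_eq_zero (hn : 0 < n) : Phi n F ^ n = 0 := by
  set S : Submodule ℂ (GA n) := LinearMap.range (ExteriorAlgebra.ι ℂ (M := Fin n → ℂ))
  have hPhi : Phi n F ∈ S ^ 2 := by
    rw [Phi]
    refine Submodule.smul_mem _ _ (Submodule.sum_mem _ fun i _ =>
      Submodule.sum_mem _ fun j _ => Submodule.smul_mem _ _ ?_)
    rw [pow_two]
    exact Submodule.mul_mem_mul (LinearMap.mem_range_self _ _) (LinearMap.mem_range_self _ _)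
  have : Phi n F ^ n ∈ S ^ (2 * n) := by
    rw [pow_mul]
    exact Submodule.pow_mem_pow _ hPhi n
  exact mem_pow_range_eq_zero n (2 * n) (by omega) _ this

end Main

/-- the Grassmann–Gaussian exponent `W = exp Φ` of the quadratic form
`Φ = −(1/2) Σ_{i,j} F_{ij} e_i ∧ e_j` attached to a skew-symmetric matrix `F` is
nonzero and is annihilated by each operator `∂_i + Σ_j F_{ij} x_j`. -/
theorem gaussian_exponent_annihilated
    (n : ℕ) (F : Matrix (Fin n) (Fin n) ℂ) (hF : Fᵀ = -F)
    (Φ : GA n)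
    (hΦ : Φ = -(1/2 : ℂ) • ∑ i, ∑ j, F i j •
      (ExteriorAlgebra.ι ℂ (Pi.single i 1) * ExteriorAlgebra.ι ℂ (Pi.single j 1)))
    (W : GA n)
    (hW : W = ∑ k ∈ Finset.range (n + 1), (Nat.factorial k : ℂ)⁻¹ • Φ ^ k) :
    W ≠ 0 ∧ ∀ i, Dop n i W + ∑ j, F i j • Xop n j W = 0 := by
  have hΦ' : Φ = Phi n F := by rw [hΦ, Phi]; rfl
  constructor
  · -- W ≠ 0 : the scalar part of W is 1
    intro h0
    have h1 : ExteriorAlgebra.algebraMapInv W = 1 := by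
      rw [hW]
      have hPhi0 : ExteriorAlgebra.algebraMapInv Φ = 0 := by
        rw [hΦ]
        simp [ExteriorAlgebra.algebraMapInv, ExteriorAlgebra.lift_ι_apply]
      rw [map_sum]
      simp only [_root_.map_smul, map_pow, hPhi0]
      rw [Finset.sum_range_succ']
      simp
    rw [h0, map_zero] at h1
    exact zero_ne_one h1
  · intro t
    have hXW : ∑ j, F t j • Xop n j W = Gt n F t * W := by
      rw [Gt, Finset.sum_mul]
      exact Finset.sum_congr rfl fun j _ => by
        rw [Xop, LinearMap.mulLeft_apply, smul_mul_assoc, ee]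
    rw [hXW, hW, hΦ']
    have hn : 0 < n := t.pos
    -- compute D W
    rw [_root_.map_sum]
    simp only [_root_.map_smul]
    rw [Finset.sum_range_succ' (fun k => (Nat.factorial k : ℂ)⁻¹ • Dop n t (Phi n F ^ k))]
    simp only [Dop_Phi_pow n F hF]
    rw [pow_zero, Dop_one, smul_zero, add_zero]
    have hterm : ∀ k, (Nat.factorial (k + 1) : ℂ)⁻¹ • (-((k + 1 : ℕ) : ℂ) •
        (Gt n F t * Phi n F ^ k)) = -((Nat.factorial k : ℂ)⁻¹ • (Gt n F t * Phi n F ^ k)) := by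
      intro k
      rw [smul_smul, ← neg_smul]
      congr 1
      have h1 : ((k : ℂ) + 1) ≠ 0 := Nat.cast_add_one_ne_zero k
      have h2 : (Nat.factorial k : ℂ) ≠ 0 := Nat.cast_ne_zero.mpr (Nat.factorial_ne_zero k)
      rw [Nat.factorial_succ]
      push_cast
      field_simp
    simp only [hterm]
    -- compute Gt * W
    rw [Finset.mul_sum]
    simp only [mul_smul_comm]
    rw [Finset.sum_range_succ (fun k => (Nat.factorial k : ℂ)⁻¹ • (Gt n F t * Phi n F ^ k))]
    rw [Phi_pow_n_eq_zero n F hn, mul_zero, smul_zero, add_zero]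
    rw [Finset.sum_neg_distrib]
    exact neg_add_cancel _
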